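/- For 0 < δ < 1/100 and σ > (d-1)/2 with d ≥ 2, there exist constants c, C > 0 depending only on d and σ such that c δ^{(d-1)/2 - σ} ≤ ∫₀¹ (1-t²)^{(d-3)/2} (1-(1-δ)t)^{-σ} dt ≤ C δ^{(d-1)/2 - σ}. -/

import Mathlib

open MeasureTheory

lemma aux_upper_comp (a M : ℝ) (hM : max 1 (2 ^ a) ≤ M) {t : ℝ} (h0 : 0 ≤ t) (h1 : t ≤ 1) :
    (1 - t ^ 2) ^ a ≤ M * (1 - t) ^ a := by
  have h2 : (1 : ℝ) - t ^ 2 = (1 - t) * (1 + t) := by ring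
  rw [h2, Real.mul_rpow (by linarith) (by linarith), mul_comm]
  have hb : (1 + t) ^ a ≤ M := by
    refine le_trans ?_ hM
    rcases le_or_gt 0 a with h | h
    · exact le_trans (Real.rpow_le_rpow (by linarith) (by linarith) h) (le_max_right _ _)
    · refine le_trans ?_ (le_max_left _ _)
      exact Real.rpow_le_one_of_one_le_of_nonpos (by linarith) h.le
  exact mul_le_mul_of_nonneg_right hb (Real.rpow_nonneg (show (0:ℝ) ≤ 1 - t by linarith) a)

lemma aux_lower_comp (a m : ℝ) (hm : m ≤ min 1 (2 ^ a)) {t : ℝ} (h0 : 0 ≤ t) (h1 : t ≤ 1) :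
    m * (1 - t) ^ a ≤ (1 - t ^ 2) ^ a := by
  have h2 : (1 : ℝ) - t ^ 2 = (1 - t) * (1 + t) := by ring
  rw [h2, Real.mul_rpow (by linarith) (by linarith), mul_comm ((1 - t) ^ a) ((1 + t) ^ a)]
  have hb : m ≤ (1 + t) ^ a := by
    refine le_trans hm ?_
    rcases le_or_gt 0 a with h | h
    · refine le_trans (min_le_left _ _) ?_
      exact Real.one_le_rpow (by linarith) h
    · refine le_trans (min_le_right _ _) ?_
      exact Real.rpow_le_rpow_of_nonpos (by linarith) (by linarith) h.le
  exact mul_le_mul_of_nonneg_right hb (Real.rpow_nonneg (show (0:ℝ) ≤ 1 - t by linarith) a)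

set_option maxHeartbeats 1000000 in
/-- For `0 < δ < 1/100` and `σ > (d-1)/2` with `d ≥ 2`, there exist constants
`c, C > 0` depending only on `d` and `σ` such that
`c δ^{(d-1)/2 - σ} ≤ ∫₀¹ (1-t²)^{(d-3)/2} (1-(1-δ)t)^{-σ} dt ≤ C δ^{(d-1)/2 - σ}`. -/
theorem stmt10 (d : ℕ) (hd : 2 ≤ d) (σ : ℝ) (hσ : ((d : ℝ) - 1) / 2 < σ) :
    ∃ c C : ℝ, 0 < c ∧ 0 < C ∧ ∀ δ : ℝ, 0 < δ → δ < 1 / 100 →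
      c * δ ^ (((d : ℝ) - 1) / 2 - σ) ≤
        (∫ t in Set.Ioo (0 : ℝ) 1, (1 - t ^ 2) ^ (((d : ℝ) - 3) / 2) * (1 - (1 - δ) * t) ^ (-σ))
      ∧ (∫ t in Set.Ioo (0 : ℝ) 1, (1 - t ^ 2) ^ (((d : ℝ) - 3) / 2) * (1 - (1 - δ) * t) ^ (-σ))
          ≤ C * δ ^ (((d : ℝ) - 1) / 2 - σ) := by
  have hd2 : (2:ℝ) ≤ (d:ℝ) := by exact_mod_cast hd
  set a : ℝ := ((d : ℝ) - 3) / 2 with ha_def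
  have ha1 : (0:ℝ) < a + 1 := by rw [ha_def]; linarith
  have haσ : a + 1 < σ := by rw [ha_def]; linarith
  have hs : (0:ℝ) < σ - (a + 1) := by linarith
  have hσ0 : (0:ℝ) < σ := by linarith
  have ha : (-1:ℝ) < a := by linarith
  have hexp : ((d:ℝ) - 1) / 2 - σ = a + 1 - σ := by rw [ha_def]; ring
  set M : ℝ := max 1 (2 ^ a) with hM_def
  set m : ℝ := min 1 (2 ^ a) with hm_def
  have hM : max 1 (2 ^ a) ≤ M := le_of_eq hM_def.symm
  have hm : m ≤ min 1 (2 ^ a) := le_of_eq hm_def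
  have hM0 : 0 < M := lt_of_lt_of_le one_pos (le_trans (le_max_left _ _) hM)
  have hm0 : 0 < m := by
    rw [hm_def]
    exact lt_min one_pos (Real.rpow_pos_of_pos two_pos a)
  refine ⟨m * 2 ^ (-σ) / (a + 1), M / (σ - (a + 1)) + M / (a + 1),
    div_pos (mul_pos hm0 (Real.rpow_pos_of_pos two_pos _)) ha1,
    add_pos (div_pos hM0 hs) (div_pos hM0 ha1), ?_⟩
  intro δ hδ0 hδ1
  rw [hexp]
  have hδ1' : δ < 1 := by linarith
  have h1δ0 : 0 < 1 - δ := by linarith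
  have hqpos : 0 < δ ^ (a + 1 - σ) := Real.rpow_pos_of_pos hδ0 _
  -- basic pointwise facts
  have hbase_ge : ∀ t ∈ Set.Icc (0:ℝ) 1, δ ≤ 1 - (1 - δ) * t := by
    intro t ht
    nlinarith [ht.1, ht.2]
  have hbase_pos : ∀ t ∈ Set.Icc (0:ℝ) 1, 0 < 1 - (1 - δ) * t := fun t ht =>
    lt_of_lt_of_le hδ0 (hbase_ge t ht)
  have hF_nonneg : ∀ t ∈ Set.Icc (0:ℝ) 1,
      0 ≤ (1 - t ^ 2) ^ a * (1 - (1 - δ) * t) ^ (-σ) := by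
    intro t ht
    exact mul_nonneg (Real.rpow_nonneg (by nlinarith [ht.1, ht.2]) _)
      (Real.rpow_nonneg (le_of_lt (hbase_pos t ht)) _)
  -- measurability
  have hFm : Measurable (fun t : ℝ => (1 - t ^ 2) ^ a * (1 - (1 - δ) * t) ^ (-σ)) := by
    have h1 : Measurable (fun t : ℝ => (1 - t ^ 2) ^ a) := by measurability
    have h2 : Measurable (fun t : ℝ => (1 - (1 - δ) * t) ^ (-σ)) := by
      have : Measurable (fun t : ℝ => 1 - (1 - δ) * t) :=
        measurable_const.sub (measurable_id.const_mul _)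
      measurability
    exact h1.mul h2
  -- integrability of (1-t)^a on any interval
  have hI1 : ∀ u v : ℝ, IntervalIntegrable (fun t : ℝ => (1 - t) ^ a) volume u v := by
    intro u v
    have h := (intervalIntegral.intervalIntegrable_rpow' (a := 1 - u) (b := 1 - v) ha).comp_sub_left 1
    simpa using h
  -- left piece: continuity, integrability
  have hcontF : ContinuousOn (fun t : ℝ => (1 - t ^ 2) ^ a * (1 - (1 - δ) * t) ^ (-σ))
      (Set.Icc 0 (1 - δ)) := by
    apply ContinuousOn.mul
    · apply ContinuousOn.rpow_const (continuous_const.sub (continuous_pow 2)).continuousOn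
      intro t ht
      left
      have h1 := ht.1; have h2 := ht.2
      show (1:ℝ) - t ^ 2 ≠ 0
      nlinarith
    · apply ContinuousOn.rpow_const
        (continuous_const.sub (continuous_const.mul continuous_id)).continuousOn
      intro t ht
      left
      exact (hbase_pos t ⟨ht.1, by linarith [ht.2]⟩).ne'
  have hIleft : IntervalIntegrable (fun t : ℝ => (1 - t ^ 2) ^ a * (1 - (1 - δ) * t) ^ (-σ))
      volume 0 (1 - δ) := by
    apply ContinuousOn.intervalIntegrable
    rwa [Set.uIcc_of_le h1δ0.le]
  -- pointwise upper bound on [0,1]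
  have hFub : ∀ t ∈ Set.Icc (0:ℝ) 1,
      (1 - t ^ 2) ^ a * (1 - (1 - δ) * t) ^ (-σ) ≤ M * δ ^ (-σ) * (1 - t) ^ a := by
    intro t ht
    have h1 : (1 - t ^ 2) ^ a ≤ M * (1 - t) ^ a := aux_upper_comp a M hM ht.1 ht.2
    have h2 : (1 - (1 - δ) * t) ^ (-σ) ≤ δ ^ (-σ) :=
      Real.rpow_le_rpow_of_nonpos hδ0 (hbase_ge t ht) (by linarith)
    calc (1 - t ^ 2) ^ a * (1 - (1 - δ) * t) ^ (-σ)
        ≤ (M * (1 - t) ^ a) * δ ^ (-σ) :=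
          mul_le_mul h1 h2 (Real.rpow_nonneg (le_of_lt (hbase_pos t ht)) _)
            (mul_nonneg hM0.le (Real.rpow_nonneg (by linarith [ht.2]) _))
      _ = M * δ ^ (-σ) * (1 - t) ^ a := by ring
  have hIub : IntervalIntegrable (fun t : ℝ => M * δ ^ (-σ) * (1 - t) ^ a) volume (1 - δ) 1 :=
    (hI1 (1 - δ) 1).const_mul _
  have hIright : IntervalIntegrable (fun t : ℝ => (1 - t ^ 2) ^ a * (1 - (1 - δ) * t) ^ (-σ))
      volume (1 - δ) 1 := by
    apply hIub.mono_fun hFm.aestronglyMeasurable.restrict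
    rw [Filter.EventuallyLE, ae_restrict_iff' measurableSet_uIoc]
    filter_upwards with t ht
    rw [Set.uIoc_of_le (by linarith : 1 - δ ≤ 1)] at ht
    have ht' : t ∈ Set.Icc (0:ℝ) 1 := ⟨by linarith [ht.1], ht.2⟩
    rw [Real.norm_eq_abs, Real.norm_eq_abs, abs_of_nonneg (hF_nonneg t ht')]
    exact le_trans (hFub t ht') (le_abs_self _)
  -- splitting
  have hsplit : (∫ t in Set.Ioo (0:ℝ) 1, (1 - t ^ 2) ^ a * (1 - (1 - δ) * t) ^ (-σ))
      = (∫ t in (0:ℝ)..(1 - δ), (1 - t ^ 2) ^ a * (1 - (1 - δ) * t) ^ (-σ))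
        + ∫ t in (1 - δ)..1, (1 - t ^ 2) ^ a * (1 - (1 - δ) * t) ^ (-σ) := by
    rw [intervalIntegral.integral_add_adjacent_intervals hIleft hIright,
      intervalIntegral.integral_of_le (by norm_num : (0:ℝ) ≤ 1)]
    exact MeasureTheory.setIntegral_congr_set MeasureTheory.Ioo_ae_eq_Ioc
  -- model integrals
  have hint1 : (∫ t in (1 - δ)..1, (1 - t) ^ a) = δ ^ (a + 1) / (a + 1) := by
    have h := intervalIntegral.integral_comp_sub_left (a := 1 - δ) (b := 1) (fun s => s ^ a) 1
    simp only [sub_sub_cancel, sub_self] at h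
    rw [h, integral_rpow (Or.inl ha), Real.zero_rpow ha1.ne']
    ring
  have hint2 : (∫ t in (0:ℝ)..(1 - δ), (1 - t) ^ (a - σ))
      = (1 - δ ^ (a + 1 - σ)) / (a + 1 - σ) := by
    have h := intervalIntegral.integral_comp_sub_left (a := (0:ℝ)) (b := 1 - δ) (fun s => s ^ (a - σ)) 1
    simp only [sub_sub_cancel, sub_zero] at h
    rw [h, integral_rpow (Or.inr ⟨ne_of_lt (by linarith : a - σ < -1),
      Set.notMem_uIcc_of_lt hδ0 one_pos⟩), Real.one_rpow,
      show a - σ + 1 = a + 1 - σ by ring]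
  constructor
  · -- lower bound
    rw [hsplit]
    have h1 : 0 ≤ ∫ t in (0:ℝ)..(1 - δ), (1 - t ^ 2) ^ a * (1 - (1 - δ) * t) ^ (-σ) := by
      apply intervalIntegral.integral_nonneg h1δ0.le
      intro u hu
      exact hF_nonneg u ⟨hu.1, by linarith [hu.2]⟩
    have hmono : (∫ t in (1 - δ)..1, m * (2 * δ) ^ (-σ) * (1 - t) ^ a)
        ≤ ∫ t in (1 - δ)..1, (1 - t ^ 2) ^ a * (1 - (1 - δ) * t) ^ (-σ) := by
      apply intervalIntegral.integral_mono_on (by linarith) ((hI1 _ _).const_mul _) hIright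
      intro t ht
      have ht0 : (0:ℝ) ≤ t := by linarith [ht.1]
      have hlc := aux_lower_comp a m hm ht0 ht.2
      have hb2 : (2 * δ) ^ (-σ) ≤ (1 - (1 - δ) * t) ^ (-σ) := by
        apply Real.rpow_le_rpow_of_nonpos (hbase_pos t ⟨ht0, ht.2⟩) ?_ (by linarith)
        nlinarith [ht.1, ht.2]
      calc m * (2 * δ) ^ (-σ) * (1 - t) ^ a
          = (m * (1 - t) ^ a) * (2 * δ) ^ (-σ) := by ring
        _ ≤ (1 - t ^ 2) ^ a * (1 - (1 - δ) * t) ^ (-σ) :=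
            mul_le_mul hlc hb2 (Real.rpow_nonneg (by linarith) _)
              (Real.rpow_nonneg (by nlinarith [ht.2]) _)
    rw [intervalIntegral.integral_const_mul, hint1] at hmono
    have heq : m * 2 ^ (-σ) / (a + 1) * δ ^ (a + 1 - σ)
        = m * (2 * δ) ^ (-σ) * (δ ^ (a + 1) / (a + 1)) := by
      rw [Real.mul_rpow (by norm_num) hδ0.le,
        show a + 1 - σ = -σ + (a + 1) by ring, Real.rpow_add hδ0]
      field_simp
    linarith [h1, hmono]
  · -- upper bound
    rw [hsplit]
    have hcont2 : ContinuousOn (fun t : ℝ => M * (1 - t) ^ (a - σ)) (Set.uIcc 0 (1 - δ)) := by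
      rw [Set.uIcc_of_le h1δ0.le]
      apply ContinuousOn.mul continuousOn_const
      apply ContinuousOn.rpow_const (continuous_const.sub continuous_id).continuousOn
      intro t ht
      left
      have : δ ≤ 1 - t := by linarith [ht.2]
      exact (lt_of_lt_of_le hδ0 this).ne'
    have hmono1 : (∫ t in (0:ℝ)..(1 - δ), (1 - t ^ 2) ^ a * (1 - (1 - δ) * t) ^ (-σ))
        ≤ ∫ t in (0:ℝ)..(1 - δ), M * (1 - t) ^ (a - σ) := by
      apply intervalIntegral.integral_mono_on h1δ0.le hIleft hcont2.intervalIntegrable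
      intro t ht
      have h1t : δ ≤ 1 - t := by linarith [ht.2]
      have h1t0 : 0 < 1 - t := lt_of_lt_of_le hδ0 h1t
      have huc := aux_upper_comp a M hM ht.1 (by linarith [ht.2])
      have hb2 : (1 - (1 - δ) * t) ^ (-σ) ≤ (1 - t) ^ (-σ) := by
        apply Real.rpow_le_rpow_of_nonpos h1t0 ?_ (by linarith)
        nlinarith [ht.1]
      calc (1 - t ^ 2) ^ a * (1 - (1 - δ) * t) ^ (-σ)
          ≤ (M * (1 - t) ^ a) * (1 - t) ^ (-σ) :=
            mul_le_mul huc hb2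
              (Real.rpow_nonneg (le_of_lt (hbase_pos t ⟨ht.1, by linarith [ht.2]⟩)) _)
              (mul_nonneg hM0.le (Real.rpow_nonneg h1t0.le _))
        _ = M * (1 - t) ^ (a - σ) := by
            rw [mul_assoc, ← Real.rpow_add h1t0, ← sub_eq_add_neg]
    have hmono2 : (∫ t in (1 - δ)..1, (1 - t ^ 2) ^ a * (1 - (1 - δ) * t) ^ (-σ))
        ≤ ∫ t in (1 - δ)..1, M * δ ^ (-σ) * (1 - t) ^ a := by
      apply intervalIntegral.integral_mono_on (by linarith) hIright hIub
      intro t ht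
      exact hFub t ⟨by linarith [ht.1], ht.2⟩
    rw [intervalIntegral.integral_const_mul, hint2] at hmono1
    rw [intervalIntegral.integral_const_mul, hint1] at hmono2
    have e1 : M * ((1 - δ ^ (a + 1 - σ)) / (a + 1 - σ))
        ≤ M / (σ - (a + 1)) * δ ^ (a + 1 - σ) := by
      have key : ∀ q : ℝ, M * ((1 - q) / (a + 1 - σ)) = M * (q - 1) / (σ - (a + 1)) := by
        intro q
        rw [show a + 1 - σ = -(σ - (a + 1)) by ring, div_neg]
        ring
      rw [key, show M / (σ - (a + 1)) * δ ^ (a + 1 - σ) = M * δ ^ (a + 1 - σ) / (σ - (a + 1)) by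
        ring]
      gcongr
      linarith
    have e2 : M * δ ^ (-σ) * (δ ^ (a + 1) / (a + 1)) = M / (a + 1) * δ ^ (a + 1 - σ) := by
      rw [show a + 1 - σ = -σ + (a + 1) by ring, Real.rpow_add hδ0 (-σ) (a + 1)]
      ring
    have expand : (M / (σ - (a + 1)) + M / (a + 1)) * δ ^ (a + 1 - σ)
        = M / (σ - (a + 1)) * δ ^ (a + 1 - σ) + M / (a + 1) * δ ^ (a + 1 - σ) := by ring
    linarith [hmono1, hmono2, e1]
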